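/- Let R be a ring and suppose there exists a sequence (r_n | n ∈ ℕ) of elements of R such that for every n ∈ ℕ and every j ≥ 1 one has r_{n+j} ⋯ r_{n+1} R ≠ r_{n+j} ⋯ r_{n+1} r_n R (equivalently, R is not right perfect). Then a free right R-module is regularly weakly based if and only if it is finitely generated. In particular, the countably generated free right R-module R^(ℕ) is not regularly weakly based. -/

import Mathlib

/-- A weak basis of a module: a weakly independent generating set. -/
def IsWeakBasis (R : Type*) [Semiring R] {M : Type*} [AddCommMonoid M]
    [Module R M] (X : Set M) : Prop :=
  (∀ x ∈ X, x ∉ Submodule.span R (X \ {x})) ∧ Submodule.span R X = ⊤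

/-- A module is regularly weakly based if every generating set contains a weak basis. -/
def RegularlyWeaklyBased (R : Type*) [Semiring R] (M : Type*) [AddCommMonoid M]
    [Module R M] : Prop :=
  ∀ X : Set M, Submodule.span R X = ⊤ → ∃ W ⊆ X, IsWeakBasis R W

/-- `seqProd r n j = r (n + j) * ⋯ * r (n + 1)` (and `1` for `j = 0`). -/
def seqProd {R : Type*} [Ring R] (r : ℕ → R) (n : ℕ) : ℕ → R
  | 0 => 1
  | j + 1 => r (n + j + 1) * seqProd r n j

/-- Let `R` be a ring admitting a sequence `(rₙ)` such that
`r_{n+j} ⋯ r_{n+1} R ≠ r_{n+j} ⋯ r_{n+1} rₙ R` for all `n` and all `j ≥ 1`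
(i.e. `R` is not right perfect). Then a free right `R`-module is regularly weakly based
iff it is finitely generated; in particular the countably generated free right `R`-module
`R^(ℕ)` is not regularly weakly based. Right `R`-modules are modules over `Rᵐᵒᵖ`. -/
theorem aux_rwb_of_finite (R : Type*) [Semiring R] (M : Type*) [AddCommMonoid M]
    [Module R M] [Module.Finite R M] : RegularlyWeaklyBased R M := by
  classical
  intro X hX
  have hfin : ∃ S : Finset M, ↑S ⊆ X ∧ Submodule.span R (S : Set M) = ⊤ := by
    obtain ⟨G, hG⟩ := Module.finite_def.mp ‹Module.Finite R M›
    have hmem : ∀ g : M, g ∈ Submodule.span R X := by intro g; rw [hX]; trivial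
    choose T hT1 hT2 using fun g : M => Submodule.mem_span_finite_of_mem_span (hmem g)
    refine ⟨G.biUnion T, ?_, ?_⟩
    · intro x hx
      simp only [Finset.coe_biUnion, Set.mem_iUnion] at hx
      obtain ⟨g, hg, hxg⟩ := hx
      exact hT1 g hxg
    · rw [eq_top_iff, ← hG, Submodule.span_le]
      intro g hg
      exact Submodule.span_mono
        (Finset.coe_subset.mpr (Finset.subset_biUnion_of_mem T hg)) (hT2 g)
  obtain ⟨S₀, hS₀X, hS₀⟩ := hfin
  let P : ℕ → Prop := fun n =>
    ∃ S : Finset M, ↑S ⊆ X ∧ Submodule.span R (S : Set M) = ⊤ ∧ S.card = n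
  have hP : ∃ n, P n := ⟨S₀.card, S₀, hS₀X, hS₀, rfl⟩
  obtain ⟨S, hSX, hSspan, hScard⟩ := Nat.find_spec hP
  refine ⟨↑S, hSX, ?_, hSspan⟩
  intro x hxS hxspan
  have hxS' : x ∈ S := hxS
  have herase : Submodule.span R (↑(S.erase x) : Set M) = ⊤ := by
    rw [eq_top_iff, ← hSspan, Submodule.span_le]
    intro s hs
    by_cases hsx : s = x
    · subst hsx
      rw [Finset.coe_erase]
      exact hxspan
    · exact Submodule.subset_span (Finset.mem_coe.mpr (Finset.mem_erase.mpr ⟨hsx, hs⟩))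
  have hlt : (S.erase x).card < Nat.find hP := by
    rw [← hScard]; exact Finset.card_erase_lt_of_mem hxS'
  exact Nat.find_min hP hlt ⟨S.erase x,
    subset_trans (Finset.coe_subset.mpr (Finset.erase_subset x S)) hSX, herase, rfl⟩

open MulOpposite

section AuxB

variable {R : Type*} [Ring R] {I : Type*} {M : Type*} [AddCommGroup M] [Module Rᵐᵒᵖ M]

/-- auxiliary basis vectors -/
private noncomputable def eB (b : Module.Basis I Rᵐᵒᵖ M) (f : ℕ ↪ I) (n : ℕ) : M := b (f n)

private noncomputable def yB (r : ℕ → R) (b : Module.Basis I Rᵐᵒᵖ M) (f : ℕ ↪ I) (n : ℕ) : M :=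
  eB b f n + op (r n) • eB b f (n + 1)

private noncomputable def zB (r : ℕ → R) (b : Module.Basis I Rᵐᵒᵖ M) (f : ℕ ↪ I) (n : ℕ) : M :=
  op (r n) • eB b f (n + 1)

private lemma coord_eB (b : Module.Basis I Rᵐᵒᵖ M) (f : ℕ ↪ I) (m k : ℕ) :
    b.coord (f m) (eB b f k) = if k = m then 1 else 0 := by
  classical
  rw [eB, Module.Basis.coord_apply, Module.Basis.repr_self_apply]
  simp [f.injective.eq_iff]

private lemma coord_zB (r : ℕ → R) (b : Module.Basis I Rᵐᵒᵖ M) (f : ℕ ↪ I) (m k : ℕ) :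
    b.coord (f m) (zB r b f k) = if k + 1 = m then op (r k) else 0 := by
  classical
  rw [zB, LinearMap.map_smul, coord_eB, smul_eq_mul]
  by_cases h : k + 1 = m <;> simp [h]

private lemma coord_yB (r : ℕ → R) (b : Module.Basis I Rᵐᵒᵖ M) (f : ℕ ↪ I) (m k : ℕ) :
    b.coord (f m) (yB r b f k) =
      (if k = m then 1 else 0) + (if k + 1 = m then op (r k) else 0) := by
  classical
  rw [yB, LinearMap.map_add, coord_eB, ← zB, coord_zB]

private lemma coord_bB (b : Module.Basis I Rᵐᵒᵖ M) (f : ℕ ↪ I) (m : ℕ) {i : I}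
    (hi : i ∉ Set.range f) : b.coord (f m) (b i) = 0 := by
  classical
  rw [Module.Basis.coord_apply, Module.Basis.repr_self_apply, if_neg (fun h => hi ⟨m, h.symm⟩)]

theorem aux_not_rwb (r : ℕ → R)
    (hr : ∀ (n j : ℕ), 1 ≤ j →
      {x : R | ∃ s : R, x = seqProd r n j * s} ≠
        {x : R | ∃ s : R, x = seqProd r n j * r n * s})
    (b : Module.Basis I Rᵐᵒᵖ M) (f : ℕ ↪ I) : ¬ RegularlyWeaklyBased Rᵐᵒᵖ M := by
  classical
  intro hRWB
  -- no r n is right invertible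
  have hinv : ∀ n s, r n * s ≠ 1 := by
    intro n s hs
    apply hr n 1 le_rfl
    have hsp : seqProd r n 1 = r (n + 1) := by simp [seqProd]
    ext x
    simp only [Set.mem_setOf_eq, hsp]
    constructor
    · rintro ⟨t, rfl⟩
      exact ⟨s * t, by rw [mul_assoc, ← mul_assoc (r n), hs, one_mul]⟩
    · rintro ⟨t, rfl⟩
      exact ⟨r n * t, by rw [mul_assoc]⟩
  have h0 : (0 : R) ≠ 1 := by
    intro h
    have hall : ∀ x : R, x = 0 := fun x => by
      calc x = x * 1 := (mul_one x).symm
      _ = x * 0 := by rw [← h]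
      _ = 0 := mul_zero x
    exact hinv 0 1 (by rw [hall (r 0 * 1), h])
  have h0' : (0 : Rᵐᵒᵖ) ≠ 1 := fun h => h0 (by simpa using congrArg unop h)
  have rn0 : ∀ m : ℕ, r (m + 1) ≠ 0 := by
    intro m hm
    apply hr m 1 le_rfl
    have hsp : seqProd r m 1 = r (m + 1) := by simp [seqProd]
    ext x
    simp [hsp, hm]
  -- the generating set
  set B' : Set M := b '' (Set.range f)ᶜ with hB'
  set X : Set M := Set.range (yB r b f) ∪ Set.range (zB r b f) ∪ B' with hX
  have hXspan : Submodule.span Rᵐᵒᵖ X = ⊤ := by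
    rw [eq_top_iff, ← b.span_eq, Submodule.span_le]
    rintro _ ⟨i, rfl⟩
    by_cases hi : i ∈ Set.range f
    · obtain ⟨n, rfl⟩ := hi
      have hbe : b (f n) = yB r b f n - zB r b f n := by
        rw [yB, zB]; abel
      rw [hbe]
      exact sub_mem
        (Submodule.subset_span (Or.inl (Or.inl ⟨n, rfl⟩)))
        (Submodule.subset_span (Or.inl (Or.inr ⟨n, rfl⟩)))
    · exact Submodule.subset_span (Or.inr ⟨i, hi, rfl⟩)
  obtain ⟨W, hWX, hWind, hWspan⟩ := hRWB X hXspan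
  -- every y n belongs to W
  have hyW : ∀ n, yB r b f n ∈ W := by
    intro n
    by_contra hyn
    have hmem : (1 : Rᵐᵒᵖ) ∈ Submodule.span Rᵐᵒᵖ ((b.coord (f n)) '' W) := by
      have h1 : eB b f n ∈ Submodule.span Rᵐᵒᵖ W := by rw [hWspan]; trivial
      have h2 := Submodule.apply_mem_span_image_of_mem_span (b.coord (f n)) h1
      rwa [coord_eB, if_pos rfl] at h2
    cases n with
    | zero =>
      have himg : (b.coord (f 0)) '' W ⊆ {0} := by
        rintro _ ⟨w, hwW, rfl⟩
        rcases hWX hwW with (⟨k, rfl⟩ | ⟨k, rfl⟩) | ⟨i, hi, rfl⟩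
        · have hk : k ≠ 0 := fun h => hyn (h ▸ hwW)
          rw [coord_yB, if_neg hk, if_neg (by omega : ¬ k + 1 = 0), add_zero]
          exact rfl
        · rw [coord_zB, if_neg (by omega : ¬ k + 1 = 0)]
          exact rfl
        · rw [coord_bB b f 0 hi]
          exact rfl
      have h1 : (1 : Rᵐᵒᵖ) ∈ Submodule.span Rᵐᵒᵖ ({0} : Set Rᵐᵒᵖ) :=
        Submodule.span_mono himg hmem
      rw [Submodule.span_zero_singleton, Submodule.mem_bot] at h1
      exact h0' h1.symm
    | succ p =>
      have himg : (b.coord (f (p + 1))) '' W ⊆ {0, op (r p)} := by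
        rintro _ ⟨w, hwW, rfl⟩
        rcases hWX hwW with (⟨k, rfl⟩ | ⟨k, rfl⟩) | ⟨i, hi, rfl⟩
        · have hk : k ≠ p + 1 := fun h => hyn (h ▸ hwW)
          rw [coord_yB, if_neg hk, zero_add]
          by_cases h2 : k + 1 = p + 1
          · have hkp : k = p := by omega
            subst hkp
            rw [if_pos h2]
            exact Or.inr rfl
          · rw [if_neg h2]
            exact Or.inl rfl
        · rw [coord_zB]
          by_cases h2 : k + 1 = p + 1
          · have hkp : k = p := by omega
            subst hkp
            rw [if_pos h2]
            exact Or.inr rfl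
          · rw [if_neg h2]
            exact Or.inl rfl
        · rw [coord_bB b f (p + 1) hi]
          exact Or.inl rfl
      have h1 : (1 : Rᵐᵒᵖ) ∈ Submodule.span Rᵐᵒᵖ ({0, op (r p)} : Set Rᵐᵒᵖ) :=
        Submodule.span_mono himg hmem
      rw [show ({0, op (r p)} : Set Rᵐᵒᵖ) = insert 0 {op (r p)} from rfl,
        Submodule.span_insert_zero, Submodule.mem_span_singleton] at h1
      obtain ⟨a, ha⟩ := h1
      apply hinv p (unop a)
      have := congrArg unop ha
      simpa [smul_eq_mul] using this
  -- the set of indices n with z n ∈ W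
  set Z : Set ℕ := {n | zB r b f n ∈ W} with hZdef
  by_cases hZ : Z.Infinite
  · -- infinite case: some z n is redundant
    obtain ⟨n, hn⟩ := hZ.nonempty
    obtain ⟨m, hmZ, hnm⟩ : ∃ m ∈ Z, n < m := by
      by_contra hcon
      push_neg at hcon
      exact hZ (Set.Finite.subset (Set.finite_Iic n) (fun k hk => hcon k hk))
    -- distinctness facts
    have hyz : ∀ j, yB r b f j ≠ zB r b f n := by
      intro j h
      have hcc := congrArg (b.coord (f j)) h
      rw [coord_yB, coord_zB, if_pos rfl, if_neg (by omega : ¬ j + 1 = j), add_zero] at hcc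
      by_cases hj : n + 1 = j
      · rw [if_pos hj] at hcc
        apply hinv n 1
        rw [mul_one]
        have h2 := congrArg unop hcc
        simpa using h2.symm
      · rw [if_neg hj] at hcc
        exact h0' hcc.symm
    have hzz : zB r b f m ≠ zB r b f n := by
      intro h
      have := congrArg (b.coord (f (m + 1))) h
      rw [coord_zB, coord_zB, if_pos rfl, if_neg (by omega : ¬ n + 1 = m + 1)] at this
      obtain ⟨m', rfl⟩ : ∃ m', m = m' + 1 := ⟨m - 1, by omega⟩
      have h2 := congrArg unop this
      simp only [unop_op, unop_zero] at h2
      exact rn0 m' h2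
    set S : Set M := Set.range (yB r b f) ∪ {zB r b f m} with hSdef
    have hSW : S ⊆ W \ {zB r b f n} := by
      rintro s (⟨j, rfl⟩ | rfl)
      · exact ⟨hyW j, fun hs => hyz j hs⟩
      · exact ⟨hmZ, fun hs => hzz hs⟩
    have hES : ∀ d, eB b f (m - d) ∈ Submodule.span Rᵐᵒᵖ S := by
      intro d
      induction d with
      | zero =>
        have hbe : eB b f m = yB r b f m - zB r b f m := by rw [yB, zB]; abel
        rw [Nat.sub_zero, hbe]
        exact sub_mem (Submodule.subset_span (Or.inl ⟨m, rfl⟩))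
          (Submodule.subset_span (Or.inr rfl))
      | succ d ih =>
        by_cases hd : m ≤ d
        · rw [show m - (d + 1) = m - d by omega]
          exact ih
        · have hk : m - (d + 1) + 1 = m - d := by omega
          set k := m - (d + 1) with hkdef
          have hbe : eB b f k = yB r b f k - op (r k) • eB b f (k + 1) := by
            rw [yB]; abel
          rw [hbe, hk]
          exact sub_mem (Submodule.subset_span (Or.inl ⟨k, rfl⟩))
            (Submodule.smul_mem _ _ ih)
    have hzspan : zB r b f n ∈ Submodule.span Rᵐᵒᵖ (W \ {zB r b f n}) := by
      apply Submodule.span_mono hSW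
      rw [zB, show n + 1 = m - (m - (n + 1)) by omega]
      exact Submodule.smul_mem _ _ (hES (m - (n + 1)))
    exact hWind _ hn hzspan
  · -- finite case
    have hZf : Z.Finite := Set.not_infinite.mp hZ
    obtain ⟨N, hN⟩ : ∃ N, ∀ k ∈ Z, k < N := by
      obtain ⟨N, hN⟩ := hZf.bddAbove
      exact ⟨N + 1, fun k hk => Nat.lt_succ_of_le (hN hk)⟩
    set κ := {i : I // i ∉ Set.range f} with hκ
    set g : ℕ ⊕ (Fin N ⊕ κ) → M :=
      Sum.elim (yB r b f) (Sum.elim (fun k => zB r b f k.1) (fun i => b i.1)) with hg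
    have hWg : W ⊆ Set.range g := by
      intro w hw
      rcases hWX hw with (⟨k, rfl⟩ | ⟨k, rfl⟩) | ⟨i, hi, rfl⟩
      · exact ⟨Sum.inl k, rfl⟩
      · have hk : k < N := hN k (by rwa [hZdef, Set.mem_setOf_eq])
        exact ⟨Sum.inr (Sum.inl ⟨k, hk⟩), rfl⟩
      · exact ⟨Sum.inr (Sum.inr ⟨i, hi⟩), rfl⟩
    have he : eB b f (N + 1) ∈ Submodule.span Rᵐᵒᵖ (Set.range g) := by
      apply Submodule.span_mono hWg
      rw [hWspan]; trivial
    rw [Finsupp.mem_span_range_iff_exists_finsupp] at he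
    obtain ⟨c, hc⟩ := he
    -- coordinate equations
    have hEq : ∀ m, N + 1 ≤ m →
        c (Sum.inl m) + c (Sum.inl (m - 1)) * op (r (m - 1)) =
          (if N + 1 = m then (1 : Rᵐᵒᵖ) else 0) := by
      intro m hm
      have hco := congrArg (b.coord (f m)) hc
      rw [map_finsuppSum, coord_eB] at hco
      have hsum : (c.sum fun i a => (b.coord (f m)) (a • g i)) =
          (c.sum fun i a => (if i = Sum.inl m then a else 0) +
            (if i = Sum.inl (m - 1) then a * op (r (m - 1)) else 0)) := by
        apply Finsupp.sum_congr
        rintro (k | (⟨k, hk⟩ | ⟨i, hi⟩)) _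
        · rw [map_smul, smul_eq_mul]
          simp only [hg, Sum.elim_inl, coord_yB, mul_add, mul_ite, mul_one, mul_zero,
            Sum.inl.injEq]
          congr 1
          by_cases h2 : k + 1 = m
          · rw [if_pos h2, if_pos (by omega : k = m - 1),
              show r k = r (m - 1) by congr 1; omega]
          · rw [if_neg h2, if_neg (by omega : ¬ k = m - 1)]
        · rw [map_smul, smul_eq_mul]
          simp only [hg, Sum.elim_inr, Sum.elim_inl, coord_zB]
          rw [if_neg (by omega : ¬ (k : ℕ) + 1 = m)]
          simp
        · rw [map_smul, smul_eq_mul]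
          simp only [hg, Sum.elim_inr]
          rw [coord_bB b f m hi]
          simp
      rw [hsum, Finsupp.sum_add, Finsupp.sum_ite_eq', Finsupp.sum_ite_eq'] at hco
      rw [← hco]
      congr 1
      · by_cases h : Sum.inl m ∈ c.support
        · rw [if_pos h]
        · rw [if_neg h, Finsupp.notMem_support_iff.mp h]
      · by_cases h : Sum.inl (m - 1) ∈ c.support
        · rw [if_pos h]
        · rw [if_neg h, Finsupp.notMem_support_iff.mp h, zero_mul]
    set α : ℕ → R := fun m => unop (c (Sum.inl m)) with hα
    have hE1 : α (N + 1) + r N * α N = 1 := by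
      have h := hEq (N + 1) le_rfl
      rw [if_pos rfl] at h
      have h2 := congrArg unop h
      simp only [unop_add, unop_mul, unop_op, unop_one, Nat.add_sub_cancel] at h2
      simp only [hα]
      exact h2
    have hE2 : ∀ m, N + 2 ≤ m → α m = -(r (m - 1) * α (m - 1)) := by
      intro m hm
      have h := hEq m (by omega)
      rw [if_neg (by omega)] at h
      have h2 := congrArg unop h
      simp only [unop_add, unop_mul, unop_op, unop_zero] at h2
      simp only [hα]
      exact eq_neg_of_add_eq_zero_left h2
    have hprod : ∀ j : ℕ, seqProd r N j * α (N + 1) = α (N + 1 + j) ∨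
        seqProd r N j * α (N + 1) = -α (N + 1 + j) := by
      intro j
      induction j with
      | zero => left; simp [seqProd]
      | succ j ih =>
        have hrec : α (N + 1 + (j + 1)) = -(r (N + j + 1) * α (N + 1 + j)) := by
          have h := hE2 (N + 1 + (j + 1)) (by omega)
          rw [show N + 1 + (j + 1) - 1 = N + 1 + j by omega,
            show N + 1 + j = N + j + 1 from by omega] at h
          rw [show N + 1 + j = N + j + 1 from by omega]
          exact h
        have hsp : seqProd r N (j + 1) = r (N + j + 1) * seqProd r N j := rfl
        rcases ih with h | h
        · right
          rw [hsp, mul_assoc, h, hrec, neg_neg]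
        · left
          rw [hsp, mul_assoc, h, hrec, mul_neg]
    have hbound : ∃ m₀, ∀ m, m₀ ≤ m → α m = 0 := by
      refine ⟨(c.support.sup fun i => Sum.elim id (fun _ => 0) i) + 1, fun m hm => ?_⟩
      have hns : Sum.inl m ∉ c.support := by
        intro hmem
        have := Finset.le_sup (f := fun i => Sum.elim id (fun _ => (0 : ℕ)) i) hmem
        simp only [Sum.elim_inl, id] at this
        omega
      simp only [hα]
      rw [Finsupp.notMem_support_iff.mp hns, unop_zero]
    obtain ⟨m₀, hm₀⟩ := hbound
    set j := m₀ + 1 with hj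
    have hαj : α (N + 1 + j) = 0 := hm₀ _ (by omega)
    have hpz : seqProd r N j * α (N + 1) = 0 := by
      rcases hprod j with h | h <;> rw [h, hαj] <;> simp
    have hsub : α (N + 1) = 1 - r N * α N := eq_sub_of_add_eq hE1
    rw [hsub, mul_sub, mul_one, sub_eq_zero] at hpz
    have hkey : seqProd r N j = seqProd r N j * r N * α N := by
      rw [mul_assoc]; exact hpz
    apply hr N j (by omega)
    ext x
    simp only [Set.mem_setOf_eq]
    constructor
    · rintro ⟨s, rfl⟩
      refine ⟨α N * s, ?_⟩
      conv_lhs => rw [hkey]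
      rw [mul_assoc]
    · rintro ⟨s, rfl⟩
      exact ⟨r N * s, by rw [mul_assoc]⟩

end AuxB


private noncomputable def opLinEquiv (R : Type*) [Ring R] : R ≃ₗ[Rᵐᵒᵖ] Rᵐᵒᵖ where
  toFun := op
  invFun := unop
  map_add' := fun x y => by simp
  map_smul' := fun a x => by
    simp only [RingHom.id_apply]
    rw [MulOpposite.smul_eq_mul_unop, smul_eq_mul, op_mul, op_unop]
  left_inv := fun x => rfl
  right_inv := fun x => rfl

private noncomputable def finsuppBasis (R : Type*) [Ring R] : Module.Basis ℕ Rᵐᵒᵖ (ℕ →₀ R) :=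
  Module.Basis.ofRepr (Finsupp.mapRange.linearEquiv (opLinEquiv R))

theorem free_regularlyWeaklyBased_iff_finite_of_not_rightPerfect.{v}
    (R : Type*) [Ring R] (r : ℕ → R)
    (hr : ∀ (n j : ℕ), 1 ≤ j →
      {x : R | ∃ s : R, x = seqProd r n j * s} ≠
        {x : R | ∃ s : R, x = seqProd r n j * r n * s}) :
    (∀ (M : Type v) [AddCommGroup M] [Module Rᵐᵒᵖ M], Module.Free Rᵐᵒᵖ M →
      (RegularlyWeaklyBased Rᵐᵒᵖ M ↔ Module.Finite Rᵐᵒᵖ M)) ∧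
    ¬ RegularlyWeaklyBased Rᵐᵒᵖ (ℕ →₀ R) := by
  constructor
  · intro M _ _ hfree
    constructor
    · intro hRWB
      by_contra hfin
      haveI := hfree
      let b := Module.Free.chooseBasis Rᵐᵒᵖ M
      haveI : Infinite (Module.Free.ChooseBasisIndex Rᵐᵒᵖ M) := by
        by_contra h
        rw [not_infinite_iff_finite] at h
        exact hfin (Module.Finite.of_basis b)
      exact aux_not_rwb r hr b (Infinite.natEmbedding _) hRWB
    · intro hfin
      exact aux_rwb_of_finite Rᵐᵒᵖ M
  · exact aux_not_rwb r hr (finsuppBasis R) (Function.Embedding.refl ℕ)
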